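/- For any TU game (N,v), the pre-nucleolus point (assumed to exist as the lexicographic minimizer of the ordered excess vector over pre-imputations) is unique: if x and y are both pre-imputations whose nonincreasingly ordered excess vectors θ(x), θ(y) are lexicographically minimal, then x = y. (Proof via convexity: θ((x+y)/2) ≤_L θ(x) with equality forcing x = y.) -/

import Mathlib

/-- A submultiset of a mapped multiset is the image of a submultiset. -/
lemma exists_map_of_le {α β : Type*} [DecidableEq α] [DecidableEq β] (f : α → β) :
    ∀ (s : Multiset β) (t : Multiset α), s ≤ t.map f → ∃ u, u ≤ t ∧ u.map f = s := by
  intro s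
  induction s using Multiset.induction_on with
  | empty => exact fun t _ => ⟨0, Multiset.zero_le t, rfl⟩
  | cons a s ih =>
    intro t h
    have ha : a ∈ t.map f := Multiset.mem_of_le h (Multiset.mem_cons_self a s)
    obtain ⟨b, hb, rfl⟩ := Multiset.mem_map.mp ha
    have hs : s ≤ (t.erase b).map f := by
      rw [Multiset.map_erase_of_mem f t hb]
      have := Multiset.erase_le_erase (f b) h
      simpa using this
    obtain ⟨u, hu, hmap⟩ := ih (t.erase b) hs
    refine ⟨b ::ₘ u, ?_, by simp [hmap]⟩
    calc b ::ₘ u ≤ b ::ₘ t.erase b := Multiset.cons_le_cons b hu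
    _ = t := Multiset.cons_erase hb

/-- The sum of a submultiset of (the coercion of) a nonincreasing list is at most
the sum of the first `card` entries of the list. -/
lemma sum_le_topSum : ∀ (L : List ℝ), L.Pairwise (· ≥ ·) →
    ∀ (M : Multiset ℝ), M ≤ (L : Multiset ℝ) → M.sum ≤ (L.take (Multiset.card M)).sum
  | [], _, M, hM => by
    have : M = 0 := le_antisymm (by simpa using hM) (Multiset.zero_le M)
    simp [this]
  | a :: L', hL, M, hM => by
    have hL' : L'.Pairwise (· ≥ ·) := (List.pairwise_cons.mp hL).2
    have hub : ∀ b ∈ L', b ≤ a := fun b hb => (List.pairwise_cons.mp hL).1 b hb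
    by_cases ha : a ∈ M
    · obtain ⟨M', rfl⟩ : ∃ M', M = a ::ₘ M' := ⟨M.erase a, (Multiset.cons_erase ha).symm⟩
      have h1 : M' ≤ (L' : Multiset ℝ) := by
        have := Multiset.erase_le_erase a hM
        simpa using this
      have := sum_le_topSum L' hL' M' h1
      simp only [Multiset.card_cons, List.take_succ_cons, List.sum_cons, Multiset.sum_cons]
      linarith
    · have h1 : M ≤ (L' : Multiset ℝ) := by
        have : M ≤ a ::ₘ (L' : Multiset ℝ) := by simpa using hM
        exact (Multiset.le_cons_of_notMem ha).mp this
      have IH := sum_le_topSum L' hL' M h1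
      rcases Nat.eq_zero_or_pos (Multiset.card M) with h0 | hpos
      · have : M = 0 := Multiset.card_eq_zero.mp h0
        simp [this, h0]
      · obtain ⟨k, hk⟩ : ∃ k, Multiset.card M = k + 1 :=
          ⟨Multiset.card M - 1, (Nat.succ_pred_eq_of_pos hpos).symm⟩
        have hcard : k + 1 ≤ L'.length := by
          have := Multiset.card_le_card h1
          simpa [hk] using this
        have hklt : k < L'.length := hcard
        have hsum := List.sum_take_succ L' k hklt
        have hmem : L'[k] ∈ L' := List.getElem_mem hklt
        have hle : L'[k] ≤ a := hub _ hmem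
        rw [hk] at IH ⊢
        rw [hsum] at IH
        simp only [List.take_succ_cons, List.sum_cons]
        linarith

lemma lex_trichotomy : ∀ (A B : List ℝ),
    List.Lex (· < ·) A B ∨ A = B ∨ List.Lex (· < ·) B A
  | [], [] => Or.inr (Or.inl rfl)
  | [], _ :: _ => Or.inl List.Lex.nil
  | _ :: _, [] => Or.inr (Or.inr List.Lex.nil)
  | a :: A, b :: B => by
    rcases lt_trichotomy a b with h | rfl | h
    · exact Or.inl (List.Lex.rel h)
    · rcases lex_trichotomy A B with h | h | h
      · exact Or.inl (List.Lex.cons h)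
      · exact Or.inr (Or.inl (by rw [h]))
      · exact Or.inr (Or.inr (List.Lex.cons h))
    · exact Or.inr (Or.inr (List.Lex.rel h))

lemma lex_asymm : ∀ {A B : List ℝ},
    List.Lex (· < ·) A B → List.Lex (· < ·) B A → False
  | _, _, List.Lex.nil, h2 => by cases h2
  | _, _, List.Lex.rel h1, List.Lex.rel h2 => absurd h1 (asymm h2)
  | _, _, List.Lex.rel h1, List.Lex.cons _ => lt_irrefl _ h1
  | _, _, List.Lex.cons _, List.Lex.rel h2 => lt_irrefl _ h2
  | _, _, List.Lex.cons h1, List.Lex.cons h2 => lex_asymm h1 h2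

/-- If `B <_lex A` and the lists have equal length, some prefix of `B` has a
strictly smaller sum than the corresponding prefix of `A`. -/
lemma lex_exists_take : ∀ (B A : List ℝ), B.length = A.length →
    List.Lex (· < ·) B A → ∃ m, (B.take m).sum < (A.take m).sum
  | [], [], _, h => by cases h
  | [], _ :: _, hlen, _ => by simp at hlen
  | _ :: _, [], _, h => by cases h
  | b :: B, a :: A, hlen, h => by
    cases h with
    | rel hba => exact ⟨1, by simpa using hba⟩
    | cons h' =>
      obtain ⟨m, hm⟩ := lex_exists_take B A (by simpa using hlen) h'
      refine ⟨m + 1, ?_⟩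
      simp only [List.take_succ_cons, List.sum_cons]
      linarith

/-- The vector (list) of excesses `v(S) - x(S)` over all coalitions `S ⊆ N`,
arranged in nonincreasing order. -/
noncomputable def theta {n : ℕ} (v : Finset (Fin n) → ℝ) (x : Fin n → ℝ) :
    List ℝ :=
  ((Finset.univ : Finset (Finset (Fin n))).val.map
    fun S => v S - ∑ k ∈ S, x k).sort (· ≥ ·)

/-- Lexicographic order `≤_L` on ordered excess vectors. -/
def lexLe (l₁ l₂ : List ℝ) : Prop :=
  l₁ = l₂ ∨ List.Lex (· < ·) l₁ l₂

lemma lexLe_antisymm {A B : List ℝ} (hab : lexLe A B) (hba : lexLe B A) : A = B := by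
  rcases hab with rfl | hab
  · rfl
  rcases hba with rfl | hba
  · rfl
  exact (lex_asymm hab hba).elim

/-- The excess function. -/
noncomputable def excess {n : ℕ} (v : Finset (Fin n) → ℝ) (w : Fin n → ℝ) :
    Finset (Fin n) → ℝ := fun S => v S - ∑ k ∈ S, w k

lemma coe_theta {n : ℕ} (v : Finset (Fin n) → ℝ) (w : Fin n → ℝ) :
    ((theta v w : List ℝ) : Multiset ℝ)
      = (Finset.univ : Finset (Finset (Fin n))).val.map (excess v w) :=
  Multiset.sort_eq _ _

lemma theta_sorted {n : ℕ} (v : Finset (Fin n) → ℝ) (w : Fin n → ℝ) :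
    (theta v w).Pairwise (· ≥ ·) :=
  Multiset.pairwise_sort _ _

lemma theta_length {n : ℕ} (v : Finset (Fin n) → ℝ) (w : Fin n → ℝ) :
    (theta v w).length
      = Multiset.card ((Finset.univ : Finset (Finset (Fin n))).val) := by
  simp [theta, Multiset.length_sort]

/-- The pre-nucleolus is unique: if `x` and `y` are pre-imputations whose ordered
excess vectors are lexicographically minimal over all pre-imputations, then `x = y`. -/
theorem preNucleolus_unique {n : ℕ} (v : Finset (Fin n) → ℝ) (hv : v ∅ = 0)
    (x y : Fin n → ℝ)
    (hx : (∑ k, x k) = v Finset.univ) (hy : (∑ k, y k) = v Finset.univ)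
    (hxmin : ∀ z : Fin n → ℝ, (∑ k, z k) = v Finset.univ →
      lexLe (theta v x) (theta v z))
    (hymin : ∀ z : Fin n → ℝ, (∑ k, z k) = v Finset.univ →
      lexLe (theta v y) (theta v z)) :
    x = y := by
  classical
  set z : Fin n → ℝ := fun k => (x k + y k) / 2 with hzdef
  have hzsum : (∑ k, z k) = v Finset.univ := by
    simp only [hzdef]
    rw [← Finset.sum_div, Finset.sum_add_distrib, hx, hy]
    ring
  -- midpoint excess
  have hezxy : ∀ S, excess v z S = (excess v x S + excess v y S) / 2 := by
    intro S
    simp only [excess, hzdef]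
    rw [← Finset.sum_div, Finset.sum_add_distrib]
    ring
  -- θ(x) = θ(y)
  have hxyeq : theta v x = theta v y := lexLe_antisymm (hxmin y hy) (hymin x hx)
  have hlenzx : (theta v x).length = (theta v z).length := by
    rw [theta_length, theta_length]
  -- prefix-sum bound : all prefix sums of θ(z) are ≤ those of θ(x)
  have key : ∀ m, ((theta v z).take m).sum ≤ ((theta v x).take m).sum := by
    intro m
    have hred : ∀ (l : List ℝ), l.length = (theta v z).length →
        l.take m = l.take (min m (theta v z).length) := by
      intro l hl
      conv_lhs => rw [← List.take_length (l := l)]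
      rw [List.take_take, hl]
    rw [hred (theta v z) rfl, hred (theta v x) hlenzx]
    set k := min m (theta v z).length with hk
    have hkle : k ≤ (theta v z).length := min_le_right _ _
    have hsubA : (((theta v z).take k : List ℝ) : Multiset ℝ)
        ≤ Finset.univ.val.map (excess v z) := by
      rw [← coe_theta]
      exact Multiset.coe_le.mpr (List.take_sublist _ _).subperm
    obtain ⟨u, hu, hmap⟩ := exists_map_of_le (excess v z) _ _ hsubA
    have hunodup : u.Nodup := Multiset.nodup_of_le hu Finset.univ.nodup
    have hcT : Multiset.card u = k := by
      have h1 : Multiset.card (u.map (excess v z)) = Multiset.card u :=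
        Multiset.card_map _ _
      rw [hmap] at h1
      rw [← h1, Multiset.coe_card, List.length_take]
      exact min_eq_left hkle
    -- sum of the prefix of θ(z)
    have hsz : (((theta v z).take k).sum : ℝ) = (u.map (excess v z)).sum := by
      rw [hmap, Multiset.sum_coe]
    -- convexity split
    have hTs : ∀ f : Finset (Fin n) → ℝ,
        (u.map f).sum = ∑ S ∈ (⟨u, hunodup⟩ : Finset (Finset (Fin n))), f S :=
      fun f => (Finset.sum_eq_multiset_sum (⟨u, hunodup⟩ : Finset (Finset (Fin n))) f).symm
    have hsplit : (u.map (excess v z)).sum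
        = ((u.map (excess v x)).sum + (u.map (excess v y)).sum) / 2 := by
      rw [hTs, hTs, hTs]
      simp_rw [hezxy]
      rw [← Finset.sum_div, Finset.sum_add_distrib]
    -- top-sum bounds
    have hbound : ∀ w : Fin n → ℝ,
        (u.map (excess v w)).sum ≤ ((theta v w).take k).sum := by
      intro w
      have hle : u.map (excess v w) ≤ Finset.univ.val.map (excess v w) :=
        Multiset.map_le_map hu
      rw [← coe_theta] at hle
      have := sum_le_topSum (theta v w) (theta_sorted v w) (u.map (excess v w)) hle
      rwa [Multiset.card_map, hcT] at this
    have hbx := hbound x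
    have hby := hbound y
    rw [← hxyeq] at hby
    rw [hsz, hsplit]
    linarith
  -- θ(z) ≤_L θ(x)
  have hlexzx : lexLe (theta v z) (theta v x) := by
    rcases lex_trichotomy (theta v z) (theta v x) with h | h | h
    · exact Or.inr h
    · exact Or.inl h
    · obtain ⟨m, hm⟩ := lex_exists_take (theta v x) (theta v z) hlenzx h
      exact absurd (key m) (not_le.mpr hm)
  have hzx : theta v x = theta v z := lexLe_antisymm (hxmin z hzsum) hlexzx
  -- multiset equalities
  have hMzx : Finset.univ.val.map (excess v z) = Finset.univ.val.map (excess v x) := by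
    rw [← coe_theta, ← coe_theta, hzx]
  have hMyx : Finset.univ.val.map (excess v y) = Finset.univ.val.map (excess v x) := by
    rw [← coe_theta, ← coe_theta, hxyeq]
  -- sums of squares
  have hsqsum : ∀ w : Fin n → ℝ,
      ((Finset.univ.val.map (excess v w)).map (fun t => t ^ 2)).sum
        = ∑ S : Finset (Fin n), (excess v w S) ^ 2 := by
    intro w
    rw [Multiset.map_map, Finset.sum_eq_multiset_sum]
    rfl
  have hsq1 : ∑ S : Finset (Fin n), (excess v z S) ^ 2
      = ∑ S : Finset (Fin n), (excess v x S) ^ 2 := by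
    rw [← hsqsum, ← hsqsum, hMzx]
  have hsq2 : ∑ S : Finset (Fin n), (excess v y S) ^ 2
      = ∑ S : Finset (Fin n), (excess v x S) ^ 2 := by
    rw [← hsqsum, ← hsqsum, hMyx]
  have hpt : ∀ S ∈ (Finset.univ : Finset (Finset (Fin n))),
      (excess v z S) ^ 2 ≤ ((excess v x S) ^ 2 + (excess v y S) ^ 2) / 2 := by
    intro S _
    rw [hezxy S]
    nlinarith [sq_nonneg (excess v x S - excess v y S)]
  have hsumeq : ∑ S : Finset (Fin n), (excess v z S) ^ 2
      = ∑ S : Finset (Fin n), ((excess v x S) ^ 2 + (excess v y S) ^ 2) / 2 := by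
    rw [hsq1, ← Finset.sum_div, Finset.sum_add_distrib, hsq2]
    ring
  have hall := (Finset.sum_eq_sum_iff_of_le hpt).mp hsumeq
  have hexey : ∀ S, excess v x S = excess v y S := by
    intro S
    have h1 := hall S (Finset.mem_univ S)
    have h2 := hezxy S
    have h4 : (excess v z S) ^ 2 = ((excess v x S + excess v y S) / 2) ^ 2 := by rw [h2]
    have h5 : ((excess v x S + excess v y S) / 2) ^ 2
        = ((excess v x S) ^ 2 + (excess v y S) ^ 2) / 2 := by rw [← h4]; exact h1
    have h3 : (excess v x S - excess v y S) ^ 2 = 0 := by linear_combination (-4 : ℝ) * h5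
    have h6 : excess v x S - excess v y S = 0 :=
      pow_eq_zero_iff (two_ne_zero) |>.mp h3
    linarith
  funext k
  have h := hexey {k}
  simp only [excess, Finset.sum_singleton] at h
  linarith
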